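/- Let R be a (possibly noncommutative) ring, let p ∈ R be an idempotent (p·p = p), and let u, v ∈ R commute (u·v = v·u). Then p·[[u,p],[v,p]] = [p·u·p, p·v·p], where [a,b] := a·b − b·a denotes the ring commutator. -/
import Mathlib
theorem projection_double_commutator {R : Type*} [Ring R] (p u v : R)
    (hp : p * p = p) (huv : u * v = v * u) :
    p * ((u * p - p * u) * (v * p - p * v) - (v * p - p * v) * (u * p - p * u)) =
      (p * u * p) * (p * v * p) - (p * v * p) * (p * u * p) := by
  have hp2 : ∀ x : R, p * (p * x) = p * x := fun x => by rw [← mul_assoc, hp]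
  have huv2 : ∀ x : R, u * (v * x) = v * (u * x) := fun x => by
    rw [← mul_assoc, huv, mul_assoc]
  simp only [mul_sub, sub_mul, mul_assoc, hp, hp2, huv, huv2]
  abel
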